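/- For every n ≥ 1, the total mutual-visibility number of the Sierpiński triangle graph is μ_t(ST_3^n) = 3, and the unique maximum total mutual-visibility set is the set of three extreme vertices of ST_3^n. -/

import Mathlib

namespace SierpinskiTriangle

/-- The unit upward triangle ("cell") with lower-left corner `c` is present in the
level-`n` Sierpiński triangle (Pascal-mod-2 characterization). -/
def Cell (n : ℕ) (c : ℕ × ℕ) : Prop :=
  Nat.land c.1 c.2 = 0 ∧ c.1 + c.2 < 2 ^ n

/-- The three corner points of the cell with lower-left corner `c`. -/
def cellCorners (c : ℕ × ℕ) : Set (ℕ × ℕ) :=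
  {c, (c.1 + 1, c.2), (c.1, c.2 + 1)}

/-- The Sierpiński triangle graph `ST₃ⁿ`, realized on the ambient type `ℕ × ℕ`
(points that are not vertices of `ST₃ⁿ` are isolated). Two distinct points are
adjacent iff they are corners of a common present cell. -/
def graph (n : ℕ) : SimpleGraph (ℕ × ℕ) where
  Adj u v := u ≠ v ∧ ∃ c, Cell n c ∧ u ∈ cellCorners c ∧ v ∈ cellCorners c
  symm := ⟨fun u v ⟨huv, c, hc, hu, hv⟩ => ⟨huv.symm, c, hc, hv, hu⟩⟩
  loopless := ⟨fun u h => h.1 rfl⟩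

lemma graph_adj {n : ℕ} {u v : ℕ × ℕ} :
    (graph n).Adj u v ↔ u ≠ v ∧ ∃ c, Cell n c ∧ u ∈ cellCorners c ∧ v ∈ cellCorners c :=
  Iff.rfl

/-- The vertex set of `ST₃ⁿ`. -/
def verts (n : ℕ) : Set (ℕ × ℕ) := {v | ∃ c, Cell n c ∧ v ∈ cellCorners c}

/-- The three extreme vertices of `ST₃ⁿ`. -/
def extreme (n : ℕ) : Set (ℕ × ℕ) := {(0, 0), (2 ^ n, 0), (0, 2 ^ n)}

/-- `IsCopy n m o` : the translate by `o` of `ST₃ᵐ` is one of the canonical copies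
of `ST₃ᵐ` inside `ST₃ⁿ` arising from the recursive construction. -/
def IsCopy (n m : ℕ) (o : ℕ × ℕ) : Prop :=
  ∃ i j : ℕ, o = (i * 2 ^ m, j * 2 ^ m) ∧ Nat.land i j = 0 ∧
    i * 2 ^ m + j * 2 ^ m + 2 ^ m ≤ 2 ^ n

/-- The vertex set of the copy of `ST₃ᵐ` at offset `o`. -/
def copyVerts (m : ℕ) (o : ℕ × ℕ) : Set (ℕ × ℕ) :=
  (fun v : ℕ × ℕ => (o.1 + v.1, o.2 + v.2)) '' verts m

/-- The extreme vertices of the copy of `ST₃ᵐ` at offset `o`. -/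
def copyExtreme (m : ℕ) (o : ℕ × ℕ) : Set (ℕ × ℕ) :=
  {(o.1, o.2), (o.1 + 2 ^ m, o.2), (o.1, o.2 + 2 ^ m)}

/-- A walk is a shortest (geodesic) walk if its length equals the graph distance. -/
def IsShortest {V : Type*} (G : SimpleGraph V) {u v : V} (w : G.Walk u v) : Prop :=
  w.length = G.dist u v

/-- `u` and `v` are `M`-visible: some shortest `u,v`-path avoids `M \ {u, v}`. -/
def Visible {V : Type*} (G : SimpleGraph V) (M : Set V) (u v : V) : Prop :=
  ∃ w : G.Walk u v, IsShortest G w ∧ ∀ x ∈ w.support, x ∈ M → x = u ∨ x = v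

/-- The interval `I(u,v)`: the set of vertices lying on some shortest `u,v`-path. -/
def interval {V : Type*} (G : SimpleGraph V) (u v : V) : Set V :=
  {x | ∃ w : G.Walk u v, IsShortest G w ∧ x ∈ w.support}

/-- `M` is a mutual-visibility set of `ST₃ⁿ`. -/
def IsMutualVisSet (n : ℕ) (M : Set (ℕ × ℕ)) : Prop :=
  M ⊆ verts n ∧ ∀ u ∈ M, ∀ v ∈ M, Visible (graph n) M u v

/-- `M` is a total mutual-visibility set of `ST₃ⁿ`. -/
def IsTotalMutualVisSet (n : ℕ) (M : Set (ℕ × ℕ)) : Prop :=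
  M ⊆ verts n ∧ ∀ u ∈ verts n, ∀ v ∈ verts n, Visible (graph n) M u v

/-- `M` is an outer mutual-visibility set of `ST₃ⁿ`. -/
def IsOuterMutualVisSet (n : ℕ) (M : Set (ℕ × ℕ)) : Prop :=
  IsMutualVisSet n M ∧ ∀ u ∈ M, ∀ v ∈ verts n \ M, Visible (graph n) M u v

/-- `M` is a dual mutual-visibility set of `ST₃ⁿ`. -/
def IsDualMutualVisSet (n : ℕ) (M : Set (ℕ × ℕ)) : Prop :=
  IsMutualVisSet n M ∧ ∀ u ∈ verts n \ M, ∀ v ∈ verts n \ M, Visible (graph n) M u v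

/-- `M` is a general position set of `ST₃ⁿ`. -/
def IsGenPosSet (n : ℕ) (M : Set (ℕ × ℕ)) : Prop :=
  M ⊆ verts n ∧ ∀ u ∈ M, ∀ v ∈ M, ∀ w ∈ M, u ≠ v → u ≠ w → v ≠ w →
    (graph n).dist u v ≠ (graph n).dist u w + (graph n).dist w v

/-- The proper vertices of the copy of `ST₃²` at offset `o` inside `ST₃ⁿ`: the vertices
of the copy lying on no shortest path between two of its extreme vertices. -/
def properVerts (n : ℕ) (o : ℕ × ℕ) : Set (ℕ × ℕ) :=
  copyVerts 2 o \
    (interval (graph n) (o.1, o.2) (o.1 + 4, o.2) ∪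
     interval (graph n) (o.1, o.2) (o.1, o.2 + 4) ∪
     interval (graph n) (o.1 + 4, o.2) (o.1, o.2 + 4))


lemma land_iff {a b : ℕ} : a &&& b = 0 ↔ ∀ i, ¬(a.testBit i ∧ b.testBit i) := by
  constructor
  · intro h i hi
    have := Nat.testBit_and a b i
    rw [h, Nat.zero_testBit, hi.1, hi.2] at this
    simp at this
  · intro h
    apply Nat.eq_of_testBit_eq
    intro i
    rw [Nat.testBit_and, Nat.zero_testBit]
    have := h i
    cases ha : a.testBit i <;> cases hb : b.testBit i <;> simp_all

lemma tb0 {a : ℕ} (h : a.testBit 0 = true) : a % 2 = 1 := by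
  rw [Nat.testBit_zero] at h; simpa using h

lemma tb0' {a : ℕ} (h : a % 2 = 1) : a.testBit 0 = true := by
  rw [Nat.testBit_zero]; simp [h]

lemma tbs {a : ℕ} {i : ℕ} : a.testBit (i+1) = (a/2).testBit i := Nat.testBit_add_one a i

-- L2
lemma land_of_add_eq_pred_pow : ∀ n x y : ℕ, x + y = 2 ^ n - 1 → x &&& y = 0 := by
  intro n
  induction n with
  | zero =>
    intro x y h
    have hx : x = 0 := by omega
    have hy : y = 0 := by omega
    subst hx hy; rfl
  | succ n ih =>
    intro x y h
    have hK : 0 < 2 ^ n := Nat.two_pow_pos n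
    have h2 : (2:ℕ) ^ (n+1) = 2 * 2 ^ n := by ring
    rw [h2] at h
    have hxy := ih (x / 2) (y / 2) (by omega)
    rw [land_iff] at hxy ⊢
    intro i hi
    cases i with
    | zero => have h1 := tb0 hi.1; have h2 := tb0 hi.2; omega
    | succ i => rw [tbs, tbs] at hi; exact hxy i hi

-- L1
lemma land_pred_or : ∀ a b : ℕ, 0 < a → 0 < b → a &&& b = 0 →
    (a - 1) &&& b = 0 ∨ a &&& (b - 1) = 0 := by
  intro a
  induction a using Nat.strong_induction_on with
  | _ a IH =>
    intro b ha hb hab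
    rw [land_iff] at hab
    rcases Nat.mod_two_eq_zero_or_one a with hae | hao
    · rcases Nat.mod_two_eq_zero_or_one b with hbe | hbo
      · -- both even
        have hab' : a / 2 &&& b / 2 = 0 := by
          rw [land_iff]; intro i hi
          rw [← tbs, ← tbs] at hi
          exact hab (i+1) hi
        rcases IH (a/2) (by omega) (b/2) (by omega) (by omega) hab' with h | h
        · left
          rw [land_iff] at h ⊢
          intro i hi
          cases i with
          | zero => have := tb0 hi.2; omega
          | succ i =>
            rw [tbs, tbs] at hi
            have e1 : (a-1)/2 = a/2 - 1 := by omega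
            rw [e1] at hi
            exact h i hi
        · right
          rw [land_iff] at h ⊢
          intro i hi
          cases i with
          | zero => have := tb0 hi.1; omega
          | succ i =>
            rw [tbs, tbs] at hi
            have e1 : (b-1)/2 = b/2 - 1 := by omega
            rw [e1] at hi
            exact h i hi
      · -- b odd
        right
        rw [land_iff]
        intro i hi
        cases i with
        | zero => have := tb0 hi.2; omega
        | succ i =>
          rw [tbs, tbs] at hi
          have e1 : (b-1)/2 = b/2 := by omega
          rw [e1, ← tbs, ← tbs] at hi
          exact hab (i+1) hi
    · -- a odd
      left
      rw [land_iff]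
      intro i hi
      cases i with
      | zero => have := tb0 hi.1; omega
      | succ i =>
        rw [tbs, tbs] at hi
        have e1 : (a-1)/2 = a/2 := by omega
        rw [e1, ← tbs, ← tbs] at hi
        exact hab (i+1) hi

-- L3
lemma land_pred_both : ∀ a b : ℕ, 0 < a → 0 < b → a &&& b ≠ 0 → (a - 1) &&& b = 0 →
    a &&& (b - 1) = 0 := by
  intro a
  induction a using Nat.strong_induction_on with
  | _ a IH =>
    intro b ha hb hab h1
    obtain ⟨j, hja, hjb⟩ : ∃ j, a.testBit j = true ∧ b.testBit j = true := by
      by_contra hc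
      push_neg at hc
      apply hab
      rw [land_iff]
      intro i hi
      exact hc i hi.1 hi.2
    rw [land_iff] at h1
    rcases Nat.mod_two_eq_zero_or_one a with hae | hao
    · -- a even; claim b even
      rcases Nat.mod_two_eq_zero_or_one b with hbe | hbo
      · -- both even: recurse
        have hj : j ≠ 0 := by
          intro h; subst h; have := tb0 hja; omega
        obtain ⟨j', rfl⟩ : ∃ j', j = j' + 1 := ⟨j - 1, by omega⟩
        have hab' : a / 2 &&& b / 2 ≠ 0 := by
          intro hc
          rw [land_iff] at hc
          rw [tbs] at hja hjb
          exact hc j' ⟨hja, hjb⟩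
        have h1' : (a/2 - 1) &&& (b/2) = 0 := by
          rw [land_iff]; intro i hi
          have e1 : a/2 - 1 = (a-1)/2 := by omega
          rw [e1, ← tbs, ← tbs] at hi
          exact h1 (i+1) hi
        have := IH (a/2) (by omega) (b/2) (by omega) (by omega) hab' h1'
        rw [land_iff] at this ⊢
        intro i hi
        cases i with
        | zero => have := tb0 hi.1; omega
        | succ i =>
          rw [tbs, tbs] at hi
          have e1 : (b-1)/2 = b/2 - 1 := by omega
          rw [e1] at hi
          exact this i hi
      · -- a even, b odd: contradiction via bit 0 of (a-1) and b
        exact absurd ⟨tb0' (show (a-1) % 2 = 1 by omega), tb0' hbo⟩ (h1 0)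
    · -- a odd
      -- first: b must be odd
      have hbo : b % 2 = 1 := by
        rcases Nat.mod_two_eq_zero_or_one b with hbe | hbo
        · -- conflict j must be > 0 since b even; then (a-1) also has bit j
          have hj : j ≠ 0 := by
            intro h; subst h; have := tb0 hjb; omega
          obtain ⟨j', rfl⟩ : ∃ j', j = j' + 1 := ⟨j - 1, by omega⟩
          have : (a-1).testBit (j'+1) = true := by
            rw [tbs]
            have e1 : (a-1)/2 = a/2 := by omega
            rw [e1, ← tbs]
            exact hja
          exact absurd ⟨this, hjb⟩ (h1 (j'+1))
        · exact hbo
      rw [land_iff]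
      intro i hi
      cases i with
      | zero => have := tb0 hi.2; omega
      | succ i =>
        obtain ⟨hia, hib⟩ := hi
        rw [tbs] at hib
        have e1 : (b-1)/2 = b/2 := by omega
        rw [e1, ← tbs] at hib
        have ha' : (a-1).testBit (i+1) = true := by
          rw [tbs]
          have e2 : (a-1)/2 = a/2 := by omega
          rw [e2, ← tbs]
          exact hia
        exact h1 (i+1) ⟨ha', hib⟩

-- L4
lemma land_sub_pow {h a b : ℕ} (h1 : 2 ^ h ≤ a) (h2 : a < 2 ^ h + 2 ^ h)
    (h3 : a &&& b = 0) : (a - 2 ^ h) &&& b = 0 := by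
  rw [land_iff] at h3 ⊢
  intro i hi
  rcases lt_or_ge i h with hih | hih
  · have e1 : 2 ^ h + (a - 2 ^ h) = a := by omega
    have := Nat.testBit_two_pow_add_gt hih (a - 2 ^ h)
    rw [e1] at this
    exact h3 i ⟨this ▸ hi.1, hi.2⟩
  · have : (a - 2 ^ h).testBit i = false :=
      Nat.testBit_lt_two_pow (lt_of_lt_of_le (by omega) (Nat.pow_le_pow_right (by norm_num) hih))
    rw [this] at hi
    exact Bool.false_ne_true hi.1

-- L5
lemma land_add_pow {h a b : ℕ} (h2 : b < 2 ^ h) (h3 : a &&& b = 0) :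
    (2 ^ h + a) &&& b = 0 := by
  rw [land_iff] at h3 ⊢
  intro i hi
  rcases lt_or_ge i h with hih | hih
  · rw [Nat.testBit_two_pow_add_gt hih] at hi
    exact h3 i hi
  · have : b.testBit i = false :=
      Nat.testBit_lt_two_pow (lt_of_lt_of_le h2 (Nat.pow_le_pow_right (by norm_num) hih))
    rw [this] at hi
    exact Bool.false_ne_true hi.2

-- L6
lemma add_lt_pow_of_land : ∀ h a b : ℕ, a < 2 ^ h → b < 2 ^ h → a &&& b = 0 →
    a + b < 2 ^ h := by
  intro h
  induction h with
  | zero => intro a b ha hb _; omega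
  | succ h ih =>
    intro a b ha hb hab
    have hK : 0 < 2 ^ h := Nat.two_pow_pos h
    have h2 : (2:ℕ) ^ (h+1) = 2 * 2 ^ h := by ring
    rw [h2] at ha hb ⊢
    have hab' : a / 2 &&& b / 2 = 0 := by
      rw [land_iff]; intro i hi
      rw [← tbs, ← tbs] at hi
      rw [land_iff] at hab
      exact hab (i+1) hi
    have hbit0 : ¬(a % 2 = 1 ∧ b % 2 = 1) := by
      rintro ⟨h1', h2'⟩
      rw [land_iff] at hab
      exact hab 0 ⟨tb0' h1', tb0' h2'⟩
    have := ih (a/2) (b/2) (by omega) (by omega) hab'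
    omega

@[simp] lemma pfst (a b : ℕ) : ((a, b) : ℕ × ℕ).1 = a := rfl
@[simp] lemma psnd (a b : ℕ) : ((a, b) : ℕ × ℕ).2 = b := rfl

lemma land_eq_and (a b : ℕ) : Nat.land a b = a &&& b := rfl

lemma cell_def {n : ℕ} {c : ℕ × ℕ} : Cell n c ↔ c.1 &&& c.2 = 0 ∧ c.1 + c.2 < 2 ^ n :=
  Iff.rfl

lemma mem_cellCorners {v c : ℕ × ℕ} :
    v ∈ cellCorners c ↔ v = c ∨ v = (c.1 + 1, c.2) ∨ v = (c.1, c.2 + 1) := by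
  simp [cellCorners]

lemma corner_coords {v c : ℕ × ℕ} (h : v ∈ cellCorners c) :
    (v.1 = c.1 ∧ v.2 = c.2) ∨ (v.1 = c.1 + 1 ∧ v.2 = c.2) ∨ (v.1 = c.1 ∧ v.2 = c.2 + 1) := by
  rw [mem_cellCorners] at h
  rcases h with rfl | rfl | rfl
  · exact Or.inl ⟨rfl, rfl⟩
  · exact Or.inr (Or.inl ⟨rfl, rfl⟩)
  · exact Or.inr (Or.inr ⟨rfl, rfl⟩)

lemma corner_of_coords {v c : ℕ × ℕ}
    (h : (v.1 = c.1 ∧ v.2 = c.2) ∨ (v.1 = c.1 + 1 ∧ v.2 = c.2) ∨ (v.1 = c.1 ∧ v.2 = c.2 + 1)) :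
    v ∈ cellCorners c := by
  rw [mem_cellCorners]
  rcases h with ⟨h1, h2⟩ | ⟨h1, h2⟩ | ⟨h1, h2⟩
  · exact Or.inl (Prod.ext h1 h2)
  · exact Or.inr (Or.inl (Prod.ext h1 h2))
  · exact Or.inr (Or.inr (Prod.ext h1 h2))

lemma mem_verts_of_cell {n : ℕ} {c v : ℕ × ℕ} (hc : Cell n c) (hv : v ∈ cellCorners c) :
    v ∈ verts n := ⟨c, hc, hv⟩

lemma adj_of_cell {n : ℕ} {c u v : ℕ × ℕ} (hc : Cell n c) (hu : u ∈ cellCorners c)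
    (hv : v ∈ cellCorners c) (huv : u ≠ v) : (graph n).Adj u v := graph_adj.mpr ⟨huv, c, hc, hu, hv⟩

lemma adj_diff {n : ℕ} {u v : ℕ × ℕ} (h : (graph n).Adj u v) :
    (v.1 = u.1 + 1 ∧ v.2 = u.2) ∨ (u.1 = v.1 + 1 ∧ u.2 = v.2) ∨
    (v.1 = u.1 ∧ v.2 = u.2 + 1) ∨ (u.1 = v.1 ∧ u.2 = v.2 + 1) ∨
    (v.1 = u.1 + 1 ∧ u.2 = v.2 + 1) ∨ (u.1 = v.1 + 1 ∧ v.2 = u.2 + 1) := by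
  obtain ⟨hne, c, -, hu, hv⟩ := graph_adj.mp h
  have hne' : ¬(u.1 = v.1 ∧ u.2 = v.2) := fun hh => hne (Prod.ext hh.1 hh.2)
  have h1 := corner_coords hu
  have h2 := corner_coords hv
  omega

-- cell monotonicity
lemma cell_mono {n : ℕ} {c : ℕ × ℕ} (h : Cell n c) : Cell (n + 1) c :=
  ⟨h.1, lt_of_lt_of_le h.2 (Nat.pow_le_pow_right (by norm_num) (by omega))⟩

lemma graph_mono {n : ℕ} : graph n ≤ graph (n + 1) := by
  intro u v h
  obtain ⟨hne, c, hc, hu, hv⟩ := graph_adj.mp h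
  exact graph_adj.mpr ⟨hne, c, cell_mono hc, hu, hv⟩

-- trichotomy of cells at level n+1
lemma cell_trichotomy {n : ℕ} {c : ℕ × ℕ} (h : Cell (n + 1) c) :
    Cell n c ∨ (2 ^ n ≤ c.1 ∧ Cell n (c.1 - 2 ^ n, c.2)) ∨
      (2 ^ n ≤ c.2 ∧ Cell n (c.1, c.2 - 2 ^ n)) := by
  obtain ⟨hl, hs⟩ := h
  rw [land_eq_and] at hl
  have h2 : (2:ℕ) ^ (n+1) = 2 ^ n + 2 ^ n := by ring
  rw [h2] at hs
  rcases le_or_gt (2 ^ n) c.1 with h1 | h1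
  · right; left
    exact ⟨h1, ⟨land_sub_pow h1 (by omega) hl, by omega⟩⟩
  · rcases le_or_gt (2 ^ n) c.2 with hb | hb
    · right; right
      refine ⟨hb, ⟨?_, by omega⟩⟩
      rw [land_eq_and, Nat.land_comm]
      rw [Nat.land_comm] at hl
      exact land_sub_pow hb (by omega) hl
    · left
      exact ⟨hl, add_lt_pow_of_land n c.1 c.2 h1 hb hl⟩

-- copy maps: cells of level n shift into level n+1
lemma cell_shift_right {n : ℕ} {c : ℕ × ℕ} (h : Cell n c) :
    Cell (n + 1) (2 ^ n + c.1, c.2) := by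
  obtain ⟨hl, hs⟩ := h
  rw [land_eq_and] at hl
  refine ⟨land_add_pow (by omega) hl, by rw [pow_succ]; omega⟩

lemma cell_shift_up {n : ℕ} {c : ℕ × ℕ} (h : Cell n c) :
    Cell (n + 1) (c.1, 2 ^ n + c.2) := by
  obtain ⟨hl, hs⟩ := h
  rw [land_eq_and] at hl
  refine ⟨?_, by rw [pow_succ]; omega⟩
  rw [land_eq_and, Nat.land_comm]
  rw [Nat.land_comm] at hl
  exact land_add_pow (by omega) hl

-- the two hom translations
def shiftRight (n : ℕ) : graph n →g graph (n + 1) where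
  toFun v := (2 ^ n + v.1, v.2)
  map_rel' := by
    intro u v h
    obtain ⟨hne, c, hc, hu, hv⟩ := graph_adj.mp h
    refine graph_adj.mpr ⟨?_, (2 ^ n + c.1, c.2), cell_shift_right hc, ?_, ?_⟩
    · intro hh
      rw [Prod.ext_iff] at hh
      simp only at hh
      exact hne (Prod.ext (by omega) hh.2)
    · refine corner_of_coords ?_
      have := corner_coords hu
      simp only [Prod.fst, Prod.snd]
      simp
      try omega
    · refine corner_of_coords ?_
      have := corner_coords hv
      simp only [Prod.fst, Prod.snd]
      simp
      try omega

def shiftUp (n : ℕ) : graph n →g graph (n + 1) where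
  toFun v := (v.1, 2 ^ n + v.2)
  map_rel' := by
    intro u v h
    obtain ⟨hne, c, hc, hu, hv⟩ := graph_adj.mp h
    refine graph_adj.mpr ⟨?_, (c.1, 2 ^ n + c.2), cell_shift_up hc, ?_, ?_⟩
    · intro hh
      rw [Prod.ext_iff] at hh
      simp only at hh
      exact hne (Prod.ext hh.1 (by omega))
    · refine corner_of_coords ?_
      have := corner_coords hu
      simp only [Prod.fst, Prod.snd]
      simp
      try omega
    · refine corner_of_coords ?_
      have := corner_coords hv
      simp only [Prod.fst, Prod.snd]
      simp
      try omega

@[simp] lemma shiftRight_apply (n : ℕ) (v : ℕ × ℕ) :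
    (shiftRight n) v = ((2 ^ n + v.1, v.2) : ℕ × ℕ) := rfl

@[simp] lemma shiftUp_apply (n : ℕ) (v : ℕ × ℕ) :
    (shiftUp n) v = ((v.1, 2 ^ n + v.2) : ℕ × ℕ) := rfl

lemma right_corner_mem {n : ℕ} : ((2 ^ n, 0) : ℕ × ℕ) ∈ verts n := by
  refine ⟨(2 ^ n - 1, 0), ⟨?_, ?_⟩, ?_⟩
  · simp [land_eq_and]
  · simp only
    have := Nat.two_pow_pos n
    omega
  · refine corner_of_coords ?_
    have := Nat.two_pow_pos n
    simp
    try omega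

lemma top_corner_mem {n : ℕ} : ((0, 2 ^ n) : ℕ × ℕ) ∈ verts n := by
  refine ⟨(0, 2 ^ n - 1), ⟨?_, ?_⟩, ?_⟩
  · simp [land_eq_and]
  · simp only
    have := Nat.two_pow_pos n
    omega
  · refine corner_of_coords ?_
    have := Nat.two_pow_pos n
    simp
    try omega

lemma reachable_root {n : ℕ} : ∀ v ∈ verts n, (graph n).Reachable v ((0, 0) : ℕ × ℕ) := by
  induction n with
  | zero =>
    rintro v ⟨c, ⟨hl, hs⟩, hv⟩
    have hc : c = ((0, 0) : ℕ × ℕ) := by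
      rw [Prod.ext_iff]; constructor <;> omega
    subst hc
    rw [mem_cellCorners] at hv
    have hcell : Cell 0 (0, 0) := ⟨rfl, by norm_num⟩
    rcases hv with rfl | rfl | rfl
    · exact SimpleGraph.Reachable.refl _
    · refine SimpleGraph.Adj.reachable ?_
      refine adj_of_cell hcell ?_ ?_ ?_
      · rw [mem_cellCorners]; right; left; rfl
      · rw [mem_cellCorners]; left; rfl
      · simp [Prod.ext_iff]
    · refine SimpleGraph.Adj.reachable ?_
      refine adj_of_cell hcell ?_ ?_ ?_
      · rw [mem_cellCorners]; right; right; rfl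
      · rw [mem_cellCorners]; left; rfl
      · simp [Prod.ext_iff]
  | succ n ih =>
    rintro v ⟨c, hc, hv⟩
    rcases cell_trichotomy hc with h | ⟨h1, h⟩ | ⟨h1, h⟩
    · exact ((ih v ⟨c, h, hv⟩).mono graph_mono)
    · -- right copy
      have hkey : ∃ v' ∈ verts n, (shiftRight n) v' = v := by
        have hcor := corner_coords hv
        refine ⟨(v.1 - 2 ^ n, v.2), ⟨(c.1 - 2 ^ n, c.2), h, corner_of_coords ?_⟩, ?_⟩
        · simp only [pfst, psnd]
          omega
        · rw [shiftRight_apply, Prod.ext_iff]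
          simp only [pfst, psnd]
          constructor <;> first | trivial | omega
      obtain ⟨v', hv', rfl⟩ := hkey
      have r1 : (graph (n+1)).Reachable ((shiftRight n) v') ((shiftRight n) ((0,0) : ℕ × ℕ)) :=
        (ih v' hv').map (shiftRight n)
      have hzero : (shiftRight n) ((0,0) : ℕ × ℕ) = ((2 ^ n, 0) : ℕ × ℕ) := rfl
      rw [hzero] at r1
      exact r1.trans ((ih _ right_corner_mem).mono graph_mono)
    · -- top copy
      have hkey : ∃ v' ∈ verts n, (shiftUp n) v' = v := by
        have hcor := corner_coords hv
        refine ⟨(v.1, v.2 - 2 ^ n), ⟨(c.1, c.2 - 2 ^ n), h, corner_of_coords ?_⟩, ?_⟩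
        · simp only [pfst, psnd]
          omega
        · rw [shiftUp_apply, Prod.ext_iff]
          simp only [pfst, psnd]
          constructor <;> first | trivial | omega
      obtain ⟨v', hv', rfl⟩ := hkey
      have r1 : (graph (n+1)).Reachable ((shiftUp n) v') ((shiftUp n) ((0,0) : ℕ × ℕ)) :=
        (ih v' hv').map (shiftUp n)
      have hzero : (shiftUp n) ((0,0) : ℕ × ℕ) = ((0, 2 ^ n) : ℕ × ℕ) := rfl
      rw [hzero] at r1
      exact r1.trans ((ih _ top_corner_mem).mono graph_mono)

lemma reachable_of_mem {n : ℕ} {u v : ℕ × ℕ} (hu : u ∈ verts n) (hv : v ∈ verts n) :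
    (graph n).Reachable u v :=
  (reachable_root u hu).trans (reachable_root v hv).symm


lemma cells_of_corner {n : ℕ} {c v : ℕ × ℕ} (hc : Cell n c) (hv : v ∈ cellCorners c) :
    c = v ∨ (1 ≤ v.1 ∧ c = (v.1 - 1, v.2)) ∨ (1 ≤ v.2 ∧ c = (v.1, v.2 - 1)) := by
  rw [mem_cellCorners] at hv
  rcases hv with rfl | rfl | rfl
  · exact Or.inl rfl
  · exact Or.inr (Or.inl ⟨by simp, by simp⟩)
  · exact Or.inr (Or.inr ⟨by simp, by simp⟩)

lemma cell_origin (n : ℕ) : Cell n ((0, 0) : ℕ × ℕ) := ⟨rfl, Nat.two_pow_pos n⟩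

lemma extreme_nbhd {n : ℕ} {x : ℕ × ℕ} (hx : x ∈ extreme n) :
    ∃ α β : ℕ × ℕ, (graph n).Adj α β ∧ ∀ y, (graph n).Adj x y → y = α ∨ y = β := by
  have hpos := Nat.two_pow_pos n
  simp only [extreme, Set.mem_insert_iff, Set.mem_singleton_iff] at hx
  rcases hx with rfl | rfl | rfl
  · refine ⟨(1, 0), (0, 1), ?_, ?_⟩
    · refine adj_of_cell (cell_origin n) ?_ ?_ ?_
      · exact corner_of_coords (Or.inr (Or.inl ⟨rfl, rfl⟩))
      · exact corner_of_coords (Or.inr (Or.inr ⟨rfl, rfl⟩))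
      · simp [Prod.ext_iff]
    · rintro y hy
      obtain ⟨hne, c, hc, hxc, hyc⟩ := graph_adj.mp hy
      have hcc := cells_of_corner hc hxc
      simp only [pfst, psnd] at hcc
      have hc0 : c = ((0, 0) : ℕ × ℕ) := by
        rcases hcc with h | ⟨h1, h⟩ | ⟨h1, h⟩
        · exact h
        · omega
        · omega
      subst hc0
      have := corner_coords hyc
      simp only [pfst, psnd] at this
      have hne' : ¬(y.1 = 0 ∧ y.2 = 0) := by
        intro hh; exact hne (Prod.ext hh.1.symm hh.2.symm)
      rcases this with ⟨ha, hb⟩ | ⟨ha, hb⟩ | ⟨ha, hb⟩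
      · omega
      · exact Or.inl (Prod.ext (by omega) (by omega))
      · exact Or.inr (Prod.ext (by omega) (by omega))
  · -- x = (2^n, 0)
    have hcell : Cell n ((2 ^ n - 1, 0) : ℕ × ℕ) := by
      refine ⟨?_, ?_⟩
      · simp [land_eq_and]
      · simp only [pfst, psnd]; omega
    refine ⟨(2 ^ n - 1, 0), (2 ^ n - 1, 1), ?_, ?_⟩
    · refine adj_of_cell hcell ?_ ?_ ?_
      · exact corner_of_coords (Or.inl ⟨rfl, rfl⟩)
      · exact corner_of_coords (Or.inr (Or.inr ⟨rfl, rfl⟩))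
      · simp [Prod.ext_iff]
    · rintro y hy
      obtain ⟨hne, c, hc, hxc, hyc⟩ := graph_adj.mp hy
      have hcc := cells_of_corner hc hxc
      simp only [pfst, psnd] at hcc
      have hs := hc.2
      have hc0 : c = ((2 ^ n - 1, 0) : ℕ × ℕ) := by
        rcases hcc with h | ⟨h1, h⟩ | ⟨h1, h⟩
        · subst h; exfalso; simp only [pfst, psnd] at hs; omega
        · exact h
        · omega
      subst hc0
      have := corner_coords hyc
      simp only [pfst, psnd] at this
      have hne' : ¬(y.1 = 2 ^ n ∧ y.2 = 0) := by
        intro hh; exact hne (Prod.ext hh.1.symm hh.2.symm)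
      rcases this with ⟨ha, hb⟩ | ⟨ha, hb⟩ | ⟨ha, hb⟩
      · exact Or.inl (Prod.ext (by omega) (by omega))
      · omega
      · exact Or.inr (Prod.ext (by omega) (by omega))
  · -- x = (0, 2^n)
    have hcell : Cell n ((0, 2 ^ n - 1) : ℕ × ℕ) := by
      refine ⟨?_, ?_⟩
      · simp [land_eq_and]
      · simp only [pfst, psnd]; omega
    refine ⟨(0, 2 ^ n - 1), (1, 2 ^ n - 1), ?_, ?_⟩
    · refine adj_of_cell hcell ?_ ?_ ?_
      · exact corner_of_coords (Or.inl ⟨rfl, rfl⟩)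
      · exact corner_of_coords (Or.inr (Or.inl ⟨rfl, rfl⟩))
      · simp [Prod.ext_iff]
    · rintro y hy
      obtain ⟨hne, c, hc, hxc, hyc⟩ := graph_adj.mp hy
      have hcc := cells_of_corner hc hxc
      simp only [pfst, psnd] at hcc
      have hs := hc.2
      have hc0 : c = ((0, 2 ^ n - 1) : ℕ × ℕ) := by
        rcases hcc with h | ⟨h1, h⟩ | ⟨h1, h⟩
        · subst h; exfalso; simp only [pfst, psnd] at hs; omega
        · omega
        · exact h
      subst hc0
      have := corner_coords hyc
      simp only [pfst, psnd] at this
      have hne' : ¬(y.1 = 0 ∧ y.2 = 2 ^ n) := by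
        intro hh; exact hne (Prod.ext hh.1.symm hh.2.symm)
      rcases this with ⟨ha, hb⟩ | ⟨ha, hb⟩ | ⟨ha, hb⟩
      · exact Or.inl (Prod.ext (by omega) (by omega))
      · exact Or.inr (Prod.ext (by omega) (by omega))
      · omega

open SimpleGraph in
lemma shortest_avoids_extreme {n : ℕ} {u v : ℕ × ℕ} (w : (graph n).Walk u v)
    (hw : w.length = (graph n).dist u v) :
    ∀ x ∈ w.support, x ∈ extreme n → x = u ∨ x = v := by
  intro x hx hxe
  by_contra hcon
  push_neg at hcon
  obtain ⟨hxu, hxv⟩ := hcon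
  obtain ⟨α, β, hαβ, hnb⟩ := extreme_nbhd hxe
  obtain ⟨q, r, rfl⟩ := Walk.mem_support_iff_exists_append.mp hx
  cases r with
  | nil => exact hxv rfl
  | @cons _ s _ hxs r' =>
    have hqnn : ¬ q.reverse.Nil := by
      rw [Walk.not_nil_iff_lt_length, Walk.length_reverse]
      rcases Nat.eq_zero_or_pos q.length with h0 | h0
      · exact absurd (Walk.eq_of_length_eq_zero h0) hxu.symm
      · exact h0
    obtain ⟨y₀, hxy₀, t, hqrev⟩ := Walk.not_nil_iff.mp hqnn
    have hqlen : q.length = t.length + 1 := by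
      have := Walk.length_reverse (p := q)
      rw [hqrev] at this
      simp only [Walk.length_cons] at this
      omega
    have hwlen : (q.append (Walk.cons hxs r')).length = t.length + r'.length + 2 := by
      rw [Walk.length_append, Walk.length_cons]
      omega
    have hdle : ∀ (W : (graph n).Walk u v), (graph n).dist u v ≤ W.length :=
      fun W => SimpleGraph.dist_le W
    by_cases hys : y₀ = s
    · have hthis := hdle (t.reverse.append (r'.copy hys.symm rfl))
      rw [Walk.length_append, Walk.length_reverse, Walk.length_copy] at hthis
      rw [hwlen] at hw
      omega
    · have hadjys : (graph n).Adj y₀ s := by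
        rcases hnb y₀ hxy₀ with rfl | rfl <;> rcases hnb s hxs with rfl | rfl
        · exact absurd rfl hys
        · exact hαβ
        · exact hαβ.symm
        · exact absurd rfl hys
      have hthis := hdle (t.reverse.append (Walk.cons hadjys r'))
      rw [Walk.length_append, Walk.length_reverse, Walk.length_cons] at hthis
      rw [hwlen] at hw
      omega

lemma extreme_subset_verts {n : ℕ} : extreme n ⊆ verts n := by
  intro x hx
  simp only [extreme, Set.mem_insert_iff, Set.mem_singleton_iff] at hx
  rcases hx with rfl | rfl | rfl
  · exact ⟨(0, 0), cell_origin n, corner_of_coords (Or.inl ⟨rfl, rfl⟩)⟩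
  · exact right_corner_mem
  · exact top_corner_mem

lemma extreme_total {n : ℕ} : IsTotalMutualVisSet n (extreme n) := by
  refine ⟨extreme_subset_verts, ?_⟩
  intro u hu v hv
  obtain ⟨w, hw⟩ := (reachable_of_mem hu hv).exists_walk_length_eq_dist
  exact ⟨w, hw, shortest_avoids_extreme w hw⟩


lemma corner1 {v c : ℕ × ℕ} (h1 : v.1 = c.1) (h2 : v.2 = c.2) : v ∈ cellCorners c :=
  corner_of_coords (Or.inl ⟨h1, h2⟩)
lemma corner2 {v c : ℕ × ℕ} (h1 : v.1 = c.1 + 1) (h2 : v.2 = c.2) : v ∈ cellCorners c :=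
  corner_of_coords (Or.inr (Or.inl ⟨h1, h2⟩))
lemma corner3 {v c : ℕ × ℕ} (h1 : v.1 = c.1) (h2 : v.2 = c.2 + 1) : v ∈ cellCorners c :=
  corner_of_coords (Or.inr (Or.inr ⟨h1, h2⟩))

lemma two_cells {n : ℕ} {v : ℕ × ℕ} (hv : v ∈ verts n) (hne : v ∉ extreme n) :
    (Cell n v ∧ 1 ≤ v.1 ∧ Cell n (v.1 - 1, v.2)) ∨
    (Cell n v ∧ 1 ≤ v.2 ∧ Cell n (v.1, v.2 - 1)) ∨
    (1 ≤ v.1 ∧ 1 ≤ v.2 ∧ Cell n (v.1 - 1, v.2) ∧ Cell n (v.1, v.2 - 1)) := by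
  obtain ⟨c, hc, hvc⟩ := hv
  have hpos := Nat.two_pow_pos n
  simp only [extreme, Set.mem_insert_iff, Set.mem_singleton_iff, not_or] at hne
  obtain ⟨hne1, hne2, hne3⟩ := hne
  have hne1' : ¬(v.1 = 0 ∧ v.2 = 0) := fun hh => hne1 (Prod.ext hh.1 hh.2)
  have hne2' : ¬(v.1 = 2 ^ n ∧ v.2 = 0) := fun hh => hne2 (Prod.ext hh.1 hh.2)
  have hne3' : ¬(v.1 = 0 ∧ v.2 = 2 ^ n) := fun hh => hne3 (Prod.ext hh.1 hh.2)
  have hcs := hc.2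
  have hcor := corner_coords hvc
  have hsum : v.1 + v.2 ≤ 2 ^ n := by omega
  rcases eq_or_lt_of_le hsum with heq | hlt
  · -- on the hypotenuse
    have h1 : 1 ≤ v.1 := by omega
    have h2 : 1 ≤ v.2 := by omega
    refine Or.inr (Or.inr ⟨h1, h2, ⟨?_, ?_⟩, ⟨?_, ?_⟩⟩)
    · show (v.1 - 1) &&& v.2 = 0
      exact land_of_add_eq_pred_pow n _ _ (by omega)
    · simp only [pfst, psnd]; omega
    · show v.1 &&& (v.2 - 1) = 0
      exact land_of_add_eq_pred_pow n _ _ (by omega)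
    · simp only [pfst, psnd]; omega
  · by_cases hl : v.1 &&& v.2 = 0
    · have hcv : Cell n v := ⟨hl, hlt⟩
      rcases Nat.eq_zero_or_pos v.1 with h10 | h10
      · have h2 : 1 ≤ v.2 := by omega
        refine Or.inr (Or.inl ⟨hcv, h2, ⟨?_, ?_⟩⟩)
        · show v.1 &&& (v.2 - 1) = 0
          rw [h10]
          exact Nat.zero_and _
        · simp only [pfst, psnd]; omega
      · rcases Nat.eq_zero_or_pos v.2 with h20 | h20
        · refine Or.inl ⟨hcv, h10, ⟨?_, ?_⟩⟩
          · show (v.1 - 1) &&& v.2 = 0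
            rw [h20]
            exact Nat.and_zero _
          · simp only [pfst, psnd]; omega
        · rcases land_pred_or v.1 v.2 h10 h20 hl with h | h
          · exact Or.inl ⟨hcv, h10, ⟨h, by simp only [pfst, psnd]; omega⟩⟩
          · exact Or.inr (Or.inl ⟨hcv, h20, ⟨h, by simp only [pfst, psnd]; omega⟩⟩)
    · have h10 : 1 ≤ v.1 := by
        rcases Nat.eq_zero_or_pos v.1 with h | h
        · exact absurd (by rw [h]; exact Nat.zero_and _) hl
        · exact h
      have h20 : 1 ≤ v.2 := by
        rcases Nat.eq_zero_or_pos v.2 with h | h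
        · exact absurd (by rw [h]; exact Nat.and_zero _) hl
        · exact h
      rcases cells_of_corner hc hvc with h | ⟨-, h⟩ | ⟨-, h⟩
      · subst h
        exact absurd hc.1 hl
      · subst h
        have ha : (v.1 - 1) &&& v.2 = 0 := hc.1
        have hb := land_pred_both v.1 v.2 h10 h20 hl ha
        exact Or.inr (Or.inr ⟨h10, h20, ⟨ha, by simp only [pfst, psnd]; omega⟩,
          ⟨hb, by simp only [pfst, psnd]; omega⟩⟩)
      · subst h
        have hb : v.1 &&& (v.2 - 1) = 0 := hc.1
        have ha : (v.1 - 1) &&& v.2 = 0 := by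
          rw [Nat.and_comm]
          refine land_pred_both v.2 v.1 h20 h10 ?_ ?_
          · rw [Nat.and_comm]; exact hl
          · rw [Nat.and_comm]; exact hb
        exact Or.inr (Or.inr ⟨h10, h20, ⟨ha, by simp only [pfst, psnd]; omega⟩,
          ⟨hb, by simp only [pfst, psnd]; omega⟩⟩)

lemma blocking_pair {n : ℕ} {v : ℕ × ℕ} (hv : v ∈ verts n) (hne : v ∉ extreme n) :
    ∃ u w : ℕ × ℕ, u ∈ verts n ∧ w ∈ verts n ∧ (graph n).Adj u v ∧ (graph n).Adj v w ∧
      ¬(graph n).Adj u w ∧ u ≠ w ∧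
      ∀ x, (graph n).Adj u x → (graph n).Adj x w → x = v := by
  rcases two_cells hv hne with ⟨hcv, h1, hcl⟩ | ⟨hcv, h2, hcd⟩ | ⟨h1, h2, hcl, hcd⟩
  · -- u = (v.1+1, v.2), w = (v.1-1, v.2)
    refine ⟨(v.1 + 1, v.2), (v.1 - 1, v.2), ?_, ?_, ?_, ?_, ?_, ?_, ?_⟩
    · exact mem_verts_of_cell hcv (corner2 (by simp only [pfst, psnd]; try omega) (by simp only [pfst, psnd]; try omega))
    · exact mem_verts_of_cell hcl (corner1 (by simp only [pfst, psnd]; try omega) (by simp only [pfst, psnd]; try omega))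
    · refine adj_of_cell hcv (corner2 (by simp only [pfst, psnd]; try omega) (by simp only [pfst, psnd]; try omega)) (corner1 rfl rfl) ?_
      intro hh; rw [Prod.ext_iff] at hh; simp only [pfst, psnd] at hh; omega
    · refine adj_of_cell hcl (corner2 (by simp only [pfst, psnd]; try omega) (by simp only [pfst, psnd]; try omega)) (corner1 (by simp only [pfst, psnd]; try omega) (by simp only [pfst, psnd]; try omega)) ?_
      intro hh; rw [Prod.ext_iff] at hh; simp only [pfst, psnd] at hh; omega
    · intro hh
      have := adj_diff hh
      simp only [pfst, psnd] at this
      omega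
    · intro hh; rw [Prod.ext_iff] at hh; simp only [pfst, psnd] at hh; omega
    · intro x hux hxw
      have d1 := adj_diff hux
      have d2 := adj_diff hxw
      simp only [pfst, psnd] at d1 d2
      exact Prod.ext (by omega) (by omega)
  · -- u = (v.1, v.2+1), w = (v.1, v.2-1)
    refine ⟨(v.1, v.2 + 1), (v.1, v.2 - 1), ?_, ?_, ?_, ?_, ?_, ?_, ?_⟩
    · exact mem_verts_of_cell hcv (corner3 (by simp only [pfst, psnd]; try omega) (by simp only [pfst, psnd]; try omega))
    · exact mem_verts_of_cell hcd (corner1 (by simp only [pfst, psnd]; try omega) (by simp only [pfst, psnd]; try omega))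
    · refine adj_of_cell hcv (corner3 (by simp only [pfst, psnd]; try omega) (by simp only [pfst, psnd]; try omega)) (corner1 rfl rfl) ?_
      intro hh; rw [Prod.ext_iff] at hh; simp only [pfst, psnd] at hh; omega
    · refine adj_of_cell hcd (corner3 (by simp only [pfst, psnd]; try omega) (by simp only [pfst, psnd]; try omega)) (corner1 (by simp only [pfst, psnd]; try omega) (by simp only [pfst, psnd]; try omega)) ?_
      intro hh; rw [Prod.ext_iff] at hh; simp only [pfst, psnd] at hh; omega
    · intro hh
      have := adj_diff hh
      simp only [pfst, psnd] at this
      omega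
    · intro hh; rw [Prod.ext_iff] at hh; simp only [pfst, psnd] at hh; omega
    · intro x hux hxw
      have d1 := adj_diff hux
      have d2 := adj_diff hxw
      simp only [pfst, psnd] at d1 d2
      exact Prod.ext (by omega) (by omega)
  · -- u = (v.1+1, v.2-1), w = (v.1-1, v.2+1)
    refine ⟨(v.1 + 1, v.2 - 1), (v.1 - 1, v.2 + 1), ?_, ?_, ?_, ?_, ?_, ?_, ?_⟩
    · exact mem_verts_of_cell hcd (corner2 (by simp only [pfst, psnd]; try omega) (by simp only [pfst, psnd]; try omega))
    · exact mem_verts_of_cell hcl (corner3 (by simp only [pfst, psnd]; try omega) (by simp only [pfst, psnd]; try omega))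
    · refine adj_of_cell hcd (corner2 (by simp only [pfst, psnd]; try omega) (by simp only [pfst, psnd]; try omega)) (corner3 (by simp only [pfst, psnd]; try omega) (by simp only [pfst, psnd]; try omega)) ?_
      intro hh; rw [Prod.ext_iff] at hh; simp only [pfst, psnd] at hh; omega
    · refine adj_of_cell hcl (corner2 (by simp only [pfst, psnd]; try omega) (by simp only [pfst, psnd]; try omega)) (corner3 (by simp only [pfst, psnd]; try omega) (by simp only [pfst, psnd]; try omega)) ?_
      intro hh; rw [Prod.ext_iff] at hh; simp only [pfst, psnd] at hh; omega
    · intro hh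
      have := adj_diff hh
      simp only [pfst, psnd] at this
      omega
    · intro hh; rw [Prod.ext_iff] at hh; simp only [pfst, psnd] at hh; omega
    · intro x hux hxw
      have d1 := adj_diff hux
      have d2 := adj_diff hxw
      simp only [pfst, psnd] at d1 d2
      exact Prod.ext (by omega) (by omega)

open SimpleGraph in
lemma total_subset_extreme {n : ℕ} {M : Set (ℕ × ℕ)} (hM : IsTotalMutualVisSet n M) :
    M ⊆ extreme n := by
  intro v hvM
  by_contra hne
  have hv : v ∈ verts n := hM.1 hvM
  obtain ⟨u, w, hu, hw, huv, hvw, hnadj, hne2, huniq⟩ := blocking_pair hv hne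
  obtain ⟨p, hp, havoid⟩ := hM.2 u hu w hw
  have hreach : (graph n).Reachable u w := ⟨Walk.cons huv (Walk.cons hvw Walk.nil)⟩
  have hd2 : (graph n).dist u w = 2 := by
    have hle : (graph n).dist u w ≤ 2 := by
      have := SimpleGraph.dist_le (Walk.cons huv (Walk.cons hvw Walk.nil))
      simpa using this
    have h0 : (graph n).dist u w ≠ 0 :=
      fun h => hne2 (hreach.dist_eq_zero_iff.mp h)
    have h1 : (graph n).dist u w ≠ 1 :=
      fun h => hnadj (SimpleGraph.dist_eq_one_iff_adj.mp h)
    omega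
  unfold IsShortest at hp
  rw [hd2] at hp
  cases p with
  | nil => simp at hp
  | @cons _ x _ h1 p1 =>
    cases p1 with
    | nil => simp at hp
    | @cons _ y _ h2 p2 =>
      have hlen : p2.length = 0 := by
        simp only [Walk.length_cons] at hp
        omega
      have hyw := Walk.eq_of_length_eq_zero hlen
      have hxw : (graph n).Adj x w := hyw ▸ h2
      have hxv : x = v := huniq x h1 hxw
      have hmem : x ∈ (Walk.cons h1 (Walk.cons h2 p2)).support := by
        simp [Walk.support_cons]
      rcases havoid x hmem (hxv.symm ▸ hvM) with h | h
      · exact (graph n).loopless.irrefl u (h ▸ h1)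
      · exact (graph n).loopless.irrefl w (h ▸ hxw)

/-- For every `n ≥ 1`, `μₜ(ST₃ⁿ) = 3`, and the unique maximum total mutual-visibility
set of `ST₃ⁿ` is the set of its three extreme vertices. -/
theorem mu_t_eq (n : ℕ) (hn : 1 ≤ n) :
    IsTotalMutualVisSet n (extreme n) ∧ (extreme n).ncard = 3 ∧
    ∀ M : Set (ℕ × ℕ), IsTotalMutualVisSet n M →
      M.ncard ≤ 3 ∧ (M.ncard = 3 → M = extreme n) := by
  have hpos := Nat.two_pow_pos n
  have hne1 : ((0, 0) : ℕ × ℕ) ≠ (2 ^ n, 0) := by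
    intro h; rw [Prod.ext_iff] at h; simp only [pfst, psnd] at h; omega
  have hne2 : ((0, 0) : ℕ × ℕ) ≠ (0, 2 ^ n) := by
    intro h; rw [Prod.ext_iff] at h; simp only [pfst, psnd] at h; omega
  have hne3 : ((2 ^ n, 0) : ℕ × ℕ) ≠ (0, 2 ^ n) := by
    intro h; rw [Prod.ext_iff] at h; simp only [pfst, psnd] at h; omega
  have hcard : (extreme n).ncard = 3 := by
    show ({(0, 0), (2 ^ n, 0), (0, 2 ^ n)} : Set (ℕ × ℕ)).ncard = 3
    rw [Set.ncard_insert_of_notMem (by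
      intro hmem
      simp only [Set.mem_insert_iff, Set.mem_singleton_iff] at hmem
      rcases hmem with h | h
      · exact hne1 h
      · exact hne2 h), Set.ncard_pair hne3]
  refine ⟨extreme_total, hcard, ?_⟩
  intro M hM
  have hsub := total_subset_extreme hM
  have hfin : (extreme n).Finite :=
    Set.Finite.insert _ (Set.Finite.insert _ (Set.finite_singleton _))
  have hle : M.ncard ≤ 3 := hcard ▸ Set.ncard_le_ncard hsub hfin
  exact ⟨hle, fun h3 => Set.eq_of_subset_of_ncard_le hsub (by rw [hcard, h3]) hfin⟩
end SierpinskiTriangle
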